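/- Let X be a normed space and Φ, Ψ : X → ℝ. Suppose that for some r and nonempty set S = {u ∈ X : Φ(u) < r}, for each λ > 0 the infimum m_λ := inf_{u ∈ S} (Φ(u)/λ - Ψ(u)) is attained at some u_λ ∈ S, and that m_λ < 0 for all λ in an interval (0, Λ). Then the map λ ↦ λ · m_λ (the minimal energy I_λ(u_λ) = Φ(u_λ) - λ Ψ(u_λ)) is strictly decreasing on (0, Λ). -/
import Mathlib

open Filter Set

/-- The map `λ ↦ λ · m_λ = I_λ(u_λ)` is strictly decreasing on `(0, Λ)`, where
`m_λ = inf_{u ∈ S}(Φ(u)/λ - Ψ(u))` is attained at `u_λ ∈ S`, `m_λ < 0` and `Φ ≥ 0` on `S`. -/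
theorem minimal_energy_strictly_decreasing
    {X : Type*} [NormedAddCommGroup X] [NormedSpace ℝ X]
    (Φ Ψ : X → ℝ) (S : Set X) (hS : S.Nonempty)
    (hΦnonneg : ∀ u ∈ S, 0 ≤ Φ u)
    (Λ : ℝ) (m : ℝ → ℝ) (uu : ℝ → X)
    (hmem : ∀ l : ℝ, 0 < l → l < Λ → uu l ∈ S)
    (hval : ∀ l : ℝ, 0 < l → l < Λ → m l = Φ (uu l) / l - Ψ (uu l))
    (hinf : ∀ l : ℝ, 0 < l → l < Λ → ∀ u ∈ S, m l ≤ Φ u / l - Ψ u)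
    (hneg : ∀ l : ℝ, 0 < l → l < Λ → m l < 0) :
    ∀ l₁ l₂ : ℝ, 0 < l₁ → l₁ < l₂ → l₂ < Λ → l₂ * m l₂ < l₁ * m l₁ := by
  intro l₁ l₂ h1 h12 h2
  have h1Λ : l₁ < Λ := h12.trans h2
  have h2p : (0:ℝ) < l₂ := h1.trans h12
  set u := uu l₁ with hu
  have huS : u ∈ S := hmem l₁ h1 h1Λ
  have hΨpos : 0 < Ψ u := by
    have := hneg l₁ h1 h1Λ
    rw [hval l₁ h1 h1Λ] at this
    have hΦ : 0 ≤ Φ u / l₁ := div_nonneg (hΦnonneg u huS) h1.le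
    linarith
  have key : m l₂ ≤ Φ u / l₂ - Ψ u := hinf l₂ h2p h2 u huS
  have h2m : l₂ * m l₂ ≤ Φ u - l₂ * Ψ u := by
    have := mul_le_mul_of_nonneg_left key h2p.le
    rw [mul_sub, mul_div_cancel₀ _ h2p.ne'] at this
    linarith
  have h1m : l₁ * m l₁ = Φ u - l₁ * Ψ u := by
    rw [hval l₁ h1 h1Λ, mul_sub, mul_div_cancel₀ _ h1.ne']
  nlinarith
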